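/- Let p ≥ 1 be an integer, r ∈ (0,1), and let (α_n) be complex numbers with |α_n| ≤ r for all n and Σ_{n=0}^∞ |α_{n+p} − α_n| < ∞. Let ζ lie on the unit circle and define the p-step blocks B_k(ζ) = A(α_{(k+1)p−1}, ζ)·A(α_{(k+1)p−2}, ζ)···A(α_{kp}, ζ). Then Σ_{k=0}^∞ ‖B_{k+1}(ζ) − B_k(ζ)‖ < ∞; indeed there is a constant C (depending only on p, r) with ‖B_{k+1}(ζ) − B_k(ζ)‖ ≤ C·Σ_{j=0}^{p−1} |α_{(k+1)p+j} − α_{kp+j}|. -/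

import Mathlib

open Filter Finset
open scoped Matrix.Norms.L2Operator

/-- The Szegő transfer matrix `A(α,z) = (1-|α|²)^{-1/2} [[z, -conj α], [-zα, 1]]`. -/
noncomputable def szegoA (a z : ℂ) : Matrix (Fin 2) (Fin 2) ℂ :=
  (((Real.sqrt (1 - ‖a‖ ^ 2) : ℝ) : ℂ))⁻¹ •
    !![z, -(starRingEnd ℂ) a; -(z * a), 1]

/-- The ordered product `A(α_{start+m-1},ζ) ⋯ A(α_{start},ζ)`. -/
noncomputable def szegoProdFrom (α : ℕ → ℂ) (ζ : ℂ) (start : ℕ) :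
    ℕ → Matrix (Fin 2) (Fin 2) ℂ
  | 0 => 1
  | m + 1 => szegoA (α (start + m)) ζ * szegoProdFrom α ζ start m

/-- The `p`-step block `B_k(ζ) = A(α_{(k+1)p-1},ζ) ⋯ A(α_{kp},ζ)`. -/
noncomputable def szegoBlock (α : ℕ → ℂ) (ζ : ℂ) (p k : ℕ) : Matrix (Fin 2) (Fin 2) ℂ :=
  szegoProdFrom α ζ (k * p) p

namespace SzegoAux


lemma euclid_coord_le (x : EuclideanSpace ℂ (Fin 2)) (j : Fin 2) : ‖x j‖ ≤ ‖x‖ := by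
  rw [EuclideanSpace.norm_eq]
  rw [show ‖x j‖ = Real.sqrt (‖x j‖ ^ 2) from (Real.sqrt_sq (norm_nonneg _)).symm]
  exact Real.sqrt_le_sqrt (Finset.single_le_sum (f := fun i => ‖x i‖ ^ 2) (fun i _ => sq_nonneg _) (Finset.mem_univ j))

lemma euclid_norm_le (y : EuclideanSpace ℂ (Fin 2)) : ‖y‖ ≤ ‖y 0‖ + ‖y 1‖ := by
  rw [EuclideanSpace.norm_eq, Fin.sum_univ_two]
  have h0 := norm_nonneg (y 0)
  have h1 := norm_nonneg (y 1)
  calc Real.sqrt (‖y 0‖ ^ 2 + ‖y 1‖ ^ 2)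
      ≤ Real.sqrt ((‖y 0‖ + ‖y 1‖) ^ 2) := Real.sqrt_le_sqrt (by nlinarith)
    _ = ‖y 0‖ + ‖y 1‖ := Real.sqrt_sq (by positivity)

lemma norm_le_four_mul (A : Matrix (Fin 2) (Fin 2) ℂ) {c : ℝ}
    (h : ∀ i j, ‖A i j‖ ≤ c) : ‖A‖ ≤ 4 * c := by
  have hc : 0 ≤ c := le_trans (norm_nonneg _) (h 0 0)
  rw [Matrix.l2_opNorm_def]
  refine ContinuousLinearMap.opNorm_le_bound _ (by positivity) fun x => ?_
  have hfun : ((Matrix.toEuclideanLin.trans LinearMap.toContinuousLinearMap) A) x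
      = (WithLp.equiv 2 (Fin 2 → ℂ)).symm (A.mulVec ((WithLp.equiv 2 (Fin 2 → ℂ)) x)) := rfl
  rw [hfun]
  set y := (WithLp.equiv 2 (Fin 2 → ℂ)).symm (A.mulVec ((WithLp.equiv 2 (Fin 2 → ℂ)) x)) with hy
  have hyi : ∀ i : Fin 2, ‖y i‖ ≤ 2 * c * ‖x‖ := by
    intro i
    have hyy : y i = A i 0 * x 0 + A i 1 * x 1 := by
      simp [hy, Matrix.mulVec, dotProduct, Fin.sum_univ_two]
      fin_cases i <;> rfl
    rw [hyy]
    calc ‖A i 0 * x 0 + A i 1 * x 1‖ ≤ ‖A i 0‖ * ‖x 0‖ + ‖A i 1‖ * ‖x 1‖ := by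
          refine le_trans (norm_add_le _ _) ?_
          simp [norm_mul]
      _ ≤ c * ‖x‖ + c * ‖x‖ := add_le_add
          (mul_le_mul (h i 0) (euclid_coord_le x 0) (norm_nonneg _) hc)
          (mul_le_mul (h i 1) (euclid_coord_le x 1) (norm_nonneg _) hc)
      _ = 2 * c * ‖x‖ := by ring
  calc ‖y‖ ≤ ‖y 0‖ + ‖y 1‖ := euclid_norm_le y
    _ ≤ 2 * c * ‖x‖ + 2 * c * ‖x‖ := add_le_add (hyi 0) (hyi 1)
    _ = 4 * c * ‖x‖ := by ring

lemma norm_one_matrix : ‖(1 : Matrix (Fin 2) (Fin 2) ℂ)‖ = 1 := by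
  rw [Matrix.cstar_norm_def, map_one]
  exact norm_one


lemma sqrt_lower {r : ℝ} (hr1 : r < 1) {x : ℝ} (hx0 : 0 ≤ x) (hx : x ≤ r) :
    Real.sqrt (1 - r ^ 2) ≤ Real.sqrt (1 - x ^ 2) :=
  Real.sqrt_le_sqrt (by nlinarith)

lemma sqrt_pos' {r : ℝ} (hr1 : r < 1) (hr0 : 0 < r) : 0 < Real.sqrt (1 - r ^ 2) :=
  Real.sqrt_pos.2 (by nlinarith)

lemma inv_sqrt_lipschitz {r : ℝ} (hr0 : 0 < r) (hr1 : r < 1) {x y : ℝ}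
    (hx0 : 0 ≤ x) (hy0 : 0 ≤ y) (hx : x ≤ r) (hy : y ≤ r) :
    |(Real.sqrt (1 - x ^ 2))⁻¹ - (Real.sqrt (1 - y ^ 2))⁻¹| ≤
      (r / (Real.sqrt (1 - r ^ 2)) ^ 3) * |x - y| := by
  set s := Real.sqrt (1 - r ^ 2) with hs
  have hspos : 0 < s := sqrt_pos' hr1 hr0
  set sx := Real.sqrt (1 - x ^ 2) with hsx
  set sy := Real.sqrt (1 - y ^ 2) with hsy
  have hsxl : s ≤ sx := sqrt_lower hr1 hx0 hx
  have hsyl : s ≤ sy := sqrt_lower hr1 hy0 hy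
  have hsxpos : 0 < sx := lt_of_lt_of_le hspos hsxl
  have hsypos : 0 < sy := lt_of_lt_of_le hspos hsyl
  have hsx2 : sx ^ 2 = 1 - x ^ 2 := Real.sq_sqrt (by nlinarith)
  have hsy2 : sy ^ 2 = 1 - y ^ 2 := Real.sq_sqrt (by nlinarith)
  -- bound |sx - sy|
  have hdiff : |sx - sy| * (sx + sy) ≤ 2 * r * |x - y| := by
    have h1 : |sx - sy| * (sx + sy) = |y ^ 2 - x ^ 2| := by
      rw [show sx + sy = |sx + sy| from (abs_of_pos (by linarith)).symm, ← abs_mul]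
      congr 1
      nlinarith [hsx2, hsy2]
    rw [h1]
    have : |y ^ 2 - x ^ 2| = |y + x| * |y - x| := by rw [← abs_mul]; ring_nf
    rw [this, abs_of_nonneg (by linarith : (0:ℝ) ≤ y + x), abs_sub_comm]
    have hxy : |x - y| ≥ 0 := abs_nonneg _
    nlinarith
  have hd2 : |sx - sy| ≤ (r / s) * |x - y| := by
    have h2s : 2 * s ≤ sx + sy := by linarith
    have := mul_le_mul_of_nonneg_left h2s (abs_nonneg (sx - sy))
    rw [div_mul_eq_mul_div, le_div_iff₀ hspos]
    nlinarith [abs_nonneg (sx - sy)]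
  -- convert to inverses
  have hinv : sx⁻¹ - sy⁻¹ = (sy - sx) * (sx * sy)⁻¹ := by
    field_simp
  rw [hinv, abs_mul, abs_sub_comm sy sx]
  have hinv2 : |(sx * sy)⁻¹| ≤ (s * s)⁻¹ := by
    rw [abs_of_pos (by positivity)]
    apply inv_anti₀ (by positivity)
    nlinarith
  calc |sx - sy| * |(sx * sy)⁻¹| ≤ ((r / s) * |x - y|) * (s * s)⁻¹ :=
        mul_le_mul hd2 hinv2 (abs_nonneg _) (by positivity)
    _ = (r / s ^ 3) * |x - y| := by
        rw [div_mul_eq_mul_div, div_mul_eq_mul_div, mul_inv, div_eq_mul_inv, div_eq_mul_inv]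
        rw [show (s:ℝ) ^ 3 = s * (s * s) by ring, mul_inv]
        ring


lemma norm_coe_inv_sqrt {r : ℝ} (hr0 : 0 < r) (hr1 : r < 1) {a : ℂ}
    (ha : ‖a‖ ≤ r) :
    ‖(((Real.sqrt (1 - ‖a‖ ^ 2) : ℝ) : ℂ))⁻¹‖ ≤ (Real.sqrt (1 - r ^ 2))⁻¹ := by
  rw [norm_inv, Complex.norm_real, Real.norm_eq_abs, abs_of_nonneg (Real.sqrt_nonneg _)]
  exact inv_anti₀ (sqrt_pos' hr1 hr0) (sqrt_lower hr1 (norm_nonneg a) ha)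

lemma entries_le {r : ℝ} (hr1 : r < 1) {a ζ : ℂ} (ha : ‖a‖ ≤ r)
    (hζ : ‖ζ‖ = 1) :
    ∀ i j, ‖(!![ζ, -(starRingEnd ℂ) a; -(ζ * a), 1] : Matrix (Fin 2) (Fin 2) ℂ) i j‖ ≤ 1 := by
  intro i j
  fin_cases i <;> fin_cases j <;>
    simp [hζ, Complex.norm_conj, map_mul] <;>
    nlinarith [norm_nonneg a]

lemma normA_le {r : ℝ} (hr0 : 0 < r) (hr1 : r < 1) {a ζ : ℂ}
    (ha : ‖a‖ ≤ r) (hζ : ‖ζ‖ = 1) :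
    ‖szegoA a ζ‖ ≤ 4 * (Real.sqrt (1 - r ^ 2))⁻¹ := by
  have hs := sqrt_pos' hr1 hr0
  apply norm_le_four_mul
  intro i j
  rw [szegoA, Matrix.smul_apply, smul_eq_mul, norm_mul]
  calc ‖(((Real.sqrt (1 - ‖a‖ ^ 2) : ℝ) : ℂ))⁻¹‖ *
        ‖(!![ζ, -(starRingEnd ℂ) a; -(ζ * a), 1] : Matrix (Fin 2) (Fin 2) ℂ) i j‖
      ≤ (Real.sqrt (1 - r ^ 2))⁻¹ * 1 :=
        mul_le_mul (norm_coe_inv_sqrt hr0 hr1 ha) (entries_le hr1 ha hζ i j)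
          (norm_nonneg _) (by positivity)
    _ = (Real.sqrt (1 - r ^ 2))⁻¹ := mul_one _

lemma A_diff_le {r : ℝ} (hr0 : 0 < r) (hr1 : r < 1) {a b ζ : ℂ}
    (ha : ‖a‖ ≤ r) (hb : ‖b‖ ≤ r) (hζ : ‖ζ‖ = 1) :
    ‖szegoA a ζ - szegoA b ζ‖ ≤
      (4 * r / (Real.sqrt (1 - r ^ 2)) ^ 3 + 4 * (Real.sqrt (1 - r ^ 2))⁻¹) *
        ‖a - b‖ := by
  set s := Real.sqrt (1 - r ^ 2) with hs
  have hspos : 0 < s := sqrt_pos' hr1 hr0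
  set ca := (((Real.sqrt (1 - ‖a‖ ^ 2) : ℝ) : ℂ))⁻¹ with hca
  set cb := (((Real.sqrt (1 - ‖b‖ ^ 2) : ℝ) : ℂ))⁻¹ with hcb
  set Ma := (!![ζ, -(starRingEnd ℂ) a; -(ζ * a), 1] : Matrix (Fin 2) (Fin 2) ℂ) with hMa
  set Mb := (!![ζ, -(starRingEnd ℂ) b; -(ζ * b), 1] : Matrix (Fin 2) (Fin 2) ℂ) with hMb
  have decomp : szegoA a ζ - szegoA b ζ = (ca - cb) • Ma + cb • (Ma - Mb) := by
    rw [szegoA, szegoA, ← hca, ← hcb, ← hMa, ← hMb]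
    module
  rw [decomp]
  have h1 : ‖(ca - cb) • Ma‖ ≤ ‖ca - cb‖ * (4 * 1) := by
    rw [norm_smul]
    exact mul_le_mul_of_nonneg_left (by simpa using norm_le_four_mul Ma (entries_le hr1 ha hζ))
      (norm_nonneg _)
  have hcd : ‖ca - cb‖ ≤ (r / s ^ 3) * ‖a - b‖ := by
    have : ca - cb = ((((Real.sqrt (1 - ‖a‖ ^ 2))⁻¹ -
        (Real.sqrt (1 - ‖b‖ ^ 2))⁻¹ : ℝ)) : ℂ) := by
      push_cast [hca, hcb]
      ring
    rw [this, Complex.norm_real, Real.norm_eq_abs]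
    calc |(Real.sqrt (1 - ‖a‖ ^ 2))⁻¹ - (Real.sqrt (1 - ‖b‖ ^ 2))⁻¹|
        ≤ (r / s ^ 3) * |‖a‖ - ‖b‖| :=
          inv_sqrt_lipschitz hr0 hr1 (norm_nonneg a) (norm_nonneg b) ha hb
      _ ≤ (r / s ^ 3) * ‖a - b‖ := by
          apply mul_le_mul_of_nonneg_left _ (by positivity)
          exact abs_norm_sub_norm_le a b
  have h2 : ‖cb • (Ma - Mb)‖ ≤ s⁻¹ * (4 * ‖a - b‖) := by
    rw [norm_smul]
    apply mul_le_mul (norm_coe_inv_sqrt hr0 hr1 hb) _ (norm_nonneg _) (by positivity)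
    apply norm_le_four_mul
    intro i j
    fin_cases i <;> fin_cases j <;>
      simp [hMa, hMb, Matrix.sub_apply, ]
    · rw [show -(starRingEnd ℂ) a + (starRingEnd ℂ) b = (starRingEnd ℂ) (b - a) by
          rw [map_sub]; ring,
        Complex.norm_conj]
      exact le_of_eq (norm_sub_rev b a)
    · rw [show -(ζ * a) + ζ * b = ζ * (b - a) by ring, norm_mul, hζ, one_mul]
      exact le_of_eq (norm_sub_rev b a)
  calc ‖(ca - cb) • Ma + cb • (Ma - Mb)‖ ≤ ‖(ca - cb) • Ma‖ + ‖cb • (Ma - Mb)‖ := norm_add_le _ _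
    _ ≤ ‖ca - cb‖ * (4 * 1) + s⁻¹ * (4 * ‖a - b‖) := add_le_add h1 h2
    _ ≤ ((r / s ^ 3) * ‖a - b‖) * (4 * 1) + s⁻¹ * (4 * ‖a - b‖) := by
        apply add_le_add_left
        exact mul_le_mul_of_nonneg_right hcd (by norm_num)
    _ = (4 * r / s ^ 3 + 4 * s⁻¹) * ‖a - b‖ := by ring


lemma prod_norm_le {r : ℝ} (hr0 : 0 < r) (hr1 : r < 1) {α : ℕ → ℂ} {ζ : ℂ}
    (hα : ∀ n, ‖α n‖ ≤ r) (hζ : ‖ζ‖ = 1) (st m : ℕ) :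
    ‖szegoProdFrom α ζ st m‖ ≤ (4 * (Real.sqrt (1 - r ^ 2))⁻¹) ^ m := by
  have hs := sqrt_pos' hr1 hr0
  induction m with
  | zero => simp [szegoProdFrom, norm_one_matrix]
  | succ m ih =>
    calc ‖szegoProdFrom α ζ st (m + 1)‖
        = ‖szegoA (α (st + m)) ζ * szegoProdFrom α ζ st m‖ := rfl
      _ ≤ ‖szegoA (α (st + m)) ζ‖ * ‖szegoProdFrom α ζ st m‖ := Matrix.l2_opNorm_mul _ _
      _ ≤ (4 * (Real.sqrt (1 - r ^ 2))⁻¹) * (4 * (Real.sqrt (1 - r ^ 2))⁻¹) ^ m :=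
          mul_le_mul (normA_le hr0 hr1 (hα _) hζ) ih (norm_nonneg _) (by positivity)
      _ = (4 * (Real.sqrt (1 - r ^ 2))⁻¹) ^ (m + 1) := (pow_succ' _ _).symm

lemma prod_diff_le {r : ℝ} (hr0 : 0 < r) (hr1 : r < 1) {α : ℕ → ℂ} {ζ : ℂ}
    (hα : ∀ n, ‖α n‖ ≤ r) (hζ : ‖ζ‖ = 1) (s1 s2 : ℕ) (m : ℕ) :
    ‖szegoProdFrom α ζ s1 m - szegoProdFrom α ζ s2 m‖ ≤
      (4 * r / (Real.sqrt (1 - r ^ 2)) ^ 3 + 4 * (Real.sqrt (1 - r ^ 2))⁻¹) *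
        (4 * (Real.sqrt (1 - r ^ 2))⁻¹) ^ m *
        ∑ j ∈ Finset.range m, ‖α (s1 + j) - α (s2 + j)‖ := by
  set s := Real.sqrt (1 - r ^ 2) with hs
  have hspos : 0 < s := sqrt_pos' hr1 hr0
  set L := 4 * r / s ^ 3 + 4 * s⁻¹ with hL
  set M := 4 * s⁻¹ with hM
  have hsle1 : s ≤ 1 := Real.sqrt_le_one.mpr (by nlinarith)
  have hM1 : 1 ≤ M := by
    rw [hM]
    have h1 : 1 ≤ s⁻¹ := (one_le_inv_iff₀.mpr ⟨hspos, hsle1⟩)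
    linarith
  have hL0 : 0 ≤ L := by rw [hL]; positivity
  induction m with
  | zero => simp [szegoProdFrom]
  | succ m ih =>
    have key : szegoProdFrom α ζ s1 (m + 1) - szegoProdFrom α ζ s2 (m + 1)
        = (szegoA (α (s1 + m)) ζ - szegoA (α (s2 + m)) ζ) * szegoProdFrom α ζ s1 m
          + szegoA (α (s2 + m)) ζ *
            (szegoProdFrom α ζ s1 m - szegoProdFrom α ζ s2 m) := by
      show szegoA (α (s1 + m)) ζ * szegoProdFrom α ζ s1 m
          - szegoA (α (s2 + m)) ζ * szegoProdFrom α ζ s2 m = _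
      noncomm_ring
    set d := ‖α (s1 + m) - α (s2 + m)‖ with hd
    set Sm := ∑ j ∈ Finset.range m, ‖α (s1 + j) - α (s2 + j)‖ with hSm
    have hd0 : 0 ≤ d := norm_nonneg _
    have hSm0 : 0 ≤ Sm := Finset.sum_nonneg fun j _ => norm_nonneg _
    have hP0 : (0:ℝ) ≤ M ^ m := by positivity
    have t1 : ‖(szegoA (α (s1 + m)) ζ - szegoA (α (s2 + m)) ζ) * szegoProdFrom α ζ s1 m‖
        ≤ (L * d) * M ^ m :=
      le_trans (Matrix.l2_opNorm_mul _ _)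
        (mul_le_mul (A_diff_le hr0 hr1 (hα _) (hα _) hζ) (prod_norm_le hr0 hr1 hα hζ s1 m)
          (norm_nonneg _) (by positivity))
    have t2 : ‖szegoA (α (s2 + m)) ζ *
          (szegoProdFrom α ζ s1 m - szegoProdFrom α ζ s2 m)‖ ≤ M * (L * M ^ m * Sm) :=
      le_trans (Matrix.l2_opNorm_mul _ _)
        (mul_le_mul (normA_le hr0 hr1 (hα _) hζ) ih (norm_nonneg _) (by positivity))
    rw [key, Finset.sum_range_succ, ← hd, ← hSm]
    calc ‖_ + _‖ ≤ (L * d) * M ^ m + M * (L * M ^ m * Sm) :=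
          le_trans (norm_add_le _ _) (add_le_add t1 t2)
      _ ≤ L * M ^ (m + 1) * (Sm + d) := by
          rw [pow_succ]
          nlinarith [mul_nonneg (mul_nonneg (mul_nonneg hL0 hP0) hd0)
            (by linarith : (0:ℝ) ≤ M - 1)]

end SzegoAux

/-- Block bounded-variation estimate: if `|αₙ| ≤ r < 1` and `Σ |α_{n+p} - αₙ| < ∞`, then the
blocks `B_k(ζ)` are of bounded variation, with a uniform estimate
`‖B_{k+1} - B_k‖ ≤ C Σ_{j<p} |α_{(k+1)p+j} - α_{kp+j}|` for a constant `C = C(p,r)`. -/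
theorem block_bounded_variation
    (p : ℕ) (hp : 1 ≤ p) (r : ℝ) (hr : r ∈ Set.Ioo (0 : ℝ) 1)
    (α : ℕ → ℂ) (hα : ∀ n, ‖α n‖ ≤ r)
    (hbv : Summable (fun n => ‖α (n + p) - α n‖))
    (ζ : ℂ) (hζ : ‖ζ‖ = 1) :
    Summable (fun k => ‖szegoBlock α ζ p (k + 1) - szegoBlock α ζ p k‖) ∧
    ∃ C > (0 : ℝ), ∀ (α' : ℕ → ℂ) (ζ' : ℂ),
      (∀ n, ‖α' n‖ ≤ r) → ‖ζ'‖ = 1 →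
      ∀ k, ‖szegoBlock α' ζ' p (k + 1) - szegoBlock α' ζ' p k‖ ≤
        C * ∑ j ∈ Finset.range p, ‖α' ((k + 1) * p + j) - α' (k * p + j)‖ := by
  obtain ⟨hr0, hr1⟩ := hr
  have hspos : 0 < Real.sqrt (1 - r ^ 2) := SzegoAux.sqrt_pos' hr1 hr0
  set C := (4 * r / (Real.sqrt (1 - r ^ 2)) ^ 3 + 4 * (Real.sqrt (1 - r ^ 2))⁻¹) *
      (4 * (Real.sqrt (1 - r ^ 2))⁻¹) ^ p with hC
  have hC0 : 0 < C := by rw [hC]; positivity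
  have hbound : ∀ (α' : ℕ → ℂ) (ζ' : ℂ), (∀ n, ‖α' n‖ ≤ r) →
      ‖ζ'‖ = 1 →
      ∀ k, ‖szegoBlock α' ζ' p (k + 1) - szegoBlock α' ζ' p k‖ ≤
        C * ∑ j ∈ Finset.range p, ‖α' ((k + 1) * p + j) - α' (k * p + j)‖ := by
    intro α' ζ' hα' hζ' k
    have h := SzegoAux.prod_diff_le hr0 hr1 hα' hζ' ((k + 1) * p) (k * p) p
    rw [hC]
    exact h
  refine ⟨?_, C, hC0, hbound⟩
  have key := hbound α ζ hα hζ
  set f : ℕ → ℝ := fun n => ‖α (n + p) - α n‖ with hf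
  have hf0 : ∀ n, 0 ≤ f n := fun n => norm_nonneg _
  set g : ℕ → ℝ :=
    fun k => ∑ j ∈ Finset.range p, ‖α ((k + 1) * p + j) - α (k * p + j)‖ with hg
  have hgf : ∀ k, g k = ∑ j ∈ Finset.range p, f (k * p + j) := by
    intro k
    refine Finset.sum_congr rfl fun j hj => ?_
    simp only [hf]
    congr 2
    ring
  have hpart : ∀ N, ∑ k ∈ Finset.range N, g k = ∑ n ∈ Finset.range (N * p), f n := by
    intro N
    induction N with
    | zero => simp
    | succ N ih =>
      rw [Finset.sum_range_succ, ih, hgf, Nat.succ_mul, Finset.sum_range_add]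
  have hsum : Summable g := by
    apply summable_of_sum_range_le (c := ∑' n, f n)
    · intro k
      rw [hgf]
      exact Finset.sum_nonneg fun j _ => hf0 _
    · intro N
      rw [hpart N]
      exact Summable.sum_le_tsum _ (fun i _ => hf0 i) hbv
  exact Summable.of_nonneg_of_le (fun k => norm_nonneg _) key (hsum.mul_left C)
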